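/- For a finitely supported multi-index ν with |ν| ≥ 1, the sum over all multi-indices η with 0 < η < ν of C(ν,η)·[1/2]_{|η|}·[1/2]_{|ν-η|} is at most 2·[1/2]_{|ν|}, where C(ν,η) = ∏_j C(ν_j,η_j) and [1/2]_n is the absolute value of the falling factorial of 1/2. -/

import Mathlib

/-- `ffHalf n = |(1/2)_n|`, the absolute value of the falling factorial of `1/2`. -/
noncomputable def ffHalf (n : ℕ) : ℝ := |(descPochhammer ℝ n).eval (1/2 : ℝ)|

/-- degree `|ν|` of a multi-index: the sum of its entries. -/
def mdeg (ν : ℕ →₀ ℕ) : ℕ := ν.sum fun _ k => k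

/-- multi-index binomial coefficient `C(ν,η) = ∏_j C(ν_j, η_j)`. -/
def mchoose (ν η : ℕ →₀ ℕ) : ℕ := ∏ j ∈ ν.support, (ν j).choose (η j)

open Finset Polynomial

noncomputable def pH (n : ℕ) : ℝ := (descPochhammer ℝ n).eval (1/2 : ℝ)

lemma ffHalf_nonneg (n : ℕ) : 0 ≤ ffHalf n := abs_nonneg _

lemma pH_succ (k : ℕ) : pH (k+1) = pH k * (1/2 - k) := by
  simp [pH, descPochhammer_succ_right, eval_mul, eval_sub]

lemma pH_sign : ∀ k, 1 ≤ k → pH k = (-1)^(k-1) * ffHalf k := by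
  intro k hk
  induction k with
  | zero => omega
  | succ k ih =>
    rcases Nat.eq_or_lt_of_le hk with h | h
    · have : k = 0 := by omega
      subst this
      simp [pH, ffHalf, descPochhammer_one]
    · have hk1 : 1 ≤ k := by omega
      have hih := ih hk1
      have habs : ffHalf (k+1) = ffHalf k * (k - 1/2 : ℝ) := by
        have h2 : |(1/2 - (k:ℝ))| = (k:ℝ) - 1/2 := by
          rw [abs_of_nonpos (by
            have : (1:ℝ) ≤ (k:ℝ) := by exact_mod_cast hk1
            linarith)]
          ring
        have := pH_succ k
        simp only [ffHalf, pH] at this ⊢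
        rw [this, abs_mul, h2]
      rw [pH_succ, hih, habs]
      have hke : k + 1 - 1 = (k - 1) + 1 := by omega
      rw [hke, pow_succ]
      have : (1/2 - (k:ℝ)) = -((k:ℝ) - 1/2) := by ring
      rw [this]
      ring

lemma pH_zero : pH 0 = 1 := by simp [pH]

/-- evaluate `descPochhammer` Vandermonde at `1/2 + 1/2 = 1`. -/
lemma pH_conv (n : ℕ) (hn : 2 ≤ n) :
    ∑ k ∈ Finset.range (n+1), (n.choose k : ℝ) * (pH k * pH (n - k)) = 0 := by
  have hsm : ∀ (k : ℕ) (x : ℝ), (descPochhammer ℤ k).smeval x = (descPochhammer ℝ k).eval x := by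
    intro k x
    rw [← aeval_eq_smeval, aeval_def, ← eval_map, descPochhammer_map]
  have h := Ring.descPochhammer_smeval_add (R := ℝ) (r := (1/2 : ℝ)) (s := (1/2 : ℝ)) n
    (Commute.all _ _)
  rw [Finset.Nat.sum_antidiagonal_eq_sum_range_succ_mk] at h
  have hone : (descPochhammer ℝ n).eval (1 : ℝ) = 0 := by
    have : ((1:ℕ) : ℝ) = (1 : ℝ) := by norm_num
    rw [← this, descPochhammer_eval_eq_descFactorial]
    have : Nat.descFactorial 1 n = 0 := Nat.descFactorial_eq_zero_iff_lt.mpr (by omega)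
    rw [this, Nat.cast_zero]
  have h12 : (1/2 : ℝ) + 1/2 = 1 := by norm_num
  rw [h12, hsm, hone] at h
  simp only [Nat.succ_eq_add_one] at h
  refine Eq.trans (Finset.sum_congr rfl fun k _ => ?_) h.symm
  simp [pH, hsm]

lemma ffHalf_conv (n : ℕ) (hn : 2 ≤ n) :
    ∑ k ∈ Finset.Ioo 0 n, (n.choose k : ℝ) * ffHalf k * ffHalf (n - k) = 2 * ffHalf n := by
  have h := pH_conv n hn
  have hn1 : 1 ≤ n := by omega
  -- split range (n+1) = {0} ∪ Ico 1 n ∪ {n}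
  have hsplit : ∑ k ∈ Finset.range (n+1), (n.choose k : ℝ) * (pH k * pH (n - k))
      = pH n + (∑ k ∈ Finset.Ico 1 n, (n.choose k : ℝ) * (pH k * pH (n - k))) + pH n := by
    rw [Finset.range_eq_Ico, Finset.sum_Ico_succ_top (by omega),
      Finset.sum_eq_sum_Ico_succ_bot (by omega)]
    simp [pH_zero]
  rw [hsplit] at h
  have hIoo : Finset.Ioo 0 n = Finset.Ico 1 n := by
    ext k; simp [Finset.mem_Ioo, Finset.mem_Ico]; omega
  rw [hIoo]
  have hterm : ∀ k ∈ Finset.Ico 1 n,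
      (n.choose k : ℝ) * ffHalf k * ffHalf (n - k)
        = (-1 : ℝ)^n * ((n.choose k : ℝ) * (pH k * pH (n - k))) := by
    intro k hk
    rw [Finset.mem_Ico] at hk
    rw [pH_sign k hk.1, pH_sign (n - k) (by omega)]
    have hpow : ((-1:ℝ))^(k-1) * (-1:ℝ)^(n-k-1) = (-1:ℝ)^n := by
      rw [← pow_add]
      have h1 : (k-1) + (n-k-1) = n - 2 := by omega
      rw [h1]
      have h2 : n = (n-2) + 2 := by omega
      conv_rhs => rw [h2]
      rw [pow_add]
      norm_num
    have hsq : ((-1:ℝ)^(k-1) * (-1:ℝ)^(n-k-1)) * ((-1:ℝ)^(k-1) * (-1:ℝ)^(n-k-1)) = 1 := by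
      rw [hpow, ← mul_pow]; norm_num
    calc (n.choose k : ℝ) * ffHalf k * ffHalf (n - k)
        = ((-1:ℝ)^(k-1) * (-1:ℝ)^(n-k-1)) * ((-1:ℝ)^(k-1) * (-1:ℝ)^(n-k-1))
          * ((n.choose k : ℝ) * ffHalf k * ffHalf (n - k)) := by
          rw [hsq, one_mul]
      _ = (-1:ℝ)^n * ((n.choose k : ℝ)
          * (((-1:ℝ))^(k-1) * ffHalf k * ((-1:ℝ)^(n-k-1) * ffHalf (n-k)))) := by
          rw [← hpow]; ring
  rw [Finset.sum_congr rfl hterm, ← Finset.mul_sum]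
  have hS : ∑ k ∈ Finset.Ico 1 n, (n.choose k : ℝ) * (pH k * pH (n - k)) = -2 * pH n := by
    linarith
  rw [hS, pH_sign n hn1]
  have hkey : (-1:ℝ)^n * (-1:ℝ)^(n-1) = -1 := by
    rw [← pow_add]
    have : n + (n - 1) = 2*(n-1) + 1 := by omega
    rw [this, pow_succ, pow_mul]
    norm_num
  linear_combination (-2 * ffHalf n) * hkey

/-! ### multi-index lemmas -/

lemma mdeg_add (a b : ℕ →₀ ℕ) : mdeg (a + b) = mdeg a + mdeg b := by
  simp [mdeg, Finsupp.sum_add_index']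

lemma mdeg_single (a i : ℕ) : mdeg (Finsupp.single a i) = i := by
  simp [mdeg, Finsupp.sum_single_index]

lemma mdeg_eq_zero_iff (η : ℕ →₀ ℕ) : mdeg η = 0 ↔ η = 0 := by
  constructor
  · intro h
    ext j
    by_contra hj
    have hjs : j ∈ η.support := Finsupp.mem_support_iff.mpr (by simpa using hj)
    have := (Finset.sum_eq_zero_iff.mp h) j hjs
    simp at this
    exact hj (by simpa using this)
  · intro h; simp [h, mdeg]

lemma eta_apply_zero {η ν : ℕ →₀ ℕ} (h : η ≤ ν) {a : ℕ} (ha : ν a = 0) : η a = 0 := by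
  have := Finsupp.le_def.mp h a
  omega

/-- decompose a sum over `Iic (single a m + ν)` when `ν a = 0`. -/
lemma sum_Iic_single_add {M : Type*} [AddCommMonoid M] (a m : ℕ) (ν : ℕ →₀ ℕ) (ha : ν a = 0)
    (g : (ℕ →₀ ℕ) → M) :
    ∑ η ∈ Finset.Iic (Finsupp.single a m + ν), g η
      = ∑ i ∈ Finset.range (m + 1), ∑ η ∈ Finset.Iic ν, g (Finsupp.single a i + η) := by
  rw [← Finset.sum_product']
  refine Finset.sum_bij' (fun η _ => (η a, η.erase a))
    (fun p _ => Finsupp.single a p.1 + p.2) ?_ ?_ ?_ ?_ ?_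
  · intro η hη
    rw [Finset.mem_Iic] at hη
    have hle := Finsupp.le_def.mp hη
    rw [Finset.mem_product, Finset.mem_range, Finset.mem_Iic]
    constructor
    · have h1 := hle a
      rw [Finsupp.add_apply, Finsupp.single_apply, if_pos rfl, ha, add_zero] at h1
      omega
    · rw [Finsupp.le_def]
      intro j
      by_cases hj : j = a
      · subst hj; simp [ha]
      · have h1 := hle j
        rw [Finsupp.add_apply, Finsupp.single_apply,
          if_neg (fun hh => hj hh.symm), zero_add] at h1
        simpa [Finsupp.erase_ne hj] using h1
  · intro p hp
    rw [Finset.mem_product, Finset.mem_range, Finset.mem_Iic] at hp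
    rw [Finset.mem_Iic]
    exact add_le_add (Finsupp.single_le_single.mpr (by omega)) hp.2
  · intro η hη
    dsimp only
    exact Finsupp.single_add_erase a η
  · intro p hp
    rw [Finset.mem_product, Finset.mem_range, Finset.mem_Iic] at hp
    have hpa : p.2 a = 0 := eta_apply_zero hp.2 ha
    have h1 : (Finsupp.single a p.1 + p.2) a = p.1 := by
      rw [Finsupp.add_apply, Finsupp.single_apply, if_pos rfl, hpa, add_zero]
    have h2 : (Finsupp.single a p.1 + p.2).erase a = p.2 := by
      rw [Finsupp.erase_add, Finsupp.erase_single,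
        Finsupp.erase_of_notMem_support (by simp [Finsupp.mem_support_iff, hpa]), zero_add]
    rw [h1, h2]
  · intro η hη
    dsimp only
    conv_lhs => rw [← Finsupp.single_add_erase a η]

lemma mchoose_single_add {a m : ℕ} {ν η : ℕ →₀ ℕ} (ha : ν a = 0) (hη : η ≤ ν) (i : ℕ)
    (hm : m ≠ 0) :
    mchoose (Finsupp.single a m + ν) (Finsupp.single a i + η) = m.choose i * mchoose ν η := by
  classical
  have hηa : η a = 0 := eta_apply_zero hη ha
  have hna : a ∉ ν.support := by simp [Finsupp.mem_support_iff, ha]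
  have hdisj : Disjoint (Finsupp.single a m).support ν.support := by
    rw [Finsupp.support_single_ne_zero a hm]; simpa using hna
  have hsupp : (Finsupp.single a m + ν).support = insert a ν.support := by
    rw [Finsupp.support_add_eq hdisj, Finsupp.support_single_ne_zero a hm, ← Finset.insert_eq]
  rw [mchoose, hsupp, Finset.prod_insert hna]
  congr 1
  · simp [Finsupp.single_apply, ha, hηa]
  · rw [mchoose]
    refine Finset.prod_congr rfl fun j hj => ?_
    have hja : j ≠ a := fun h => hna (h ▸ hj)
    simp [Finsupp.single_apply, Ne.symm hja, hja]

lemma genfun (ν : ℕ →₀ ℕ) :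
    ∑ η ∈ Finset.Iic ν, (mchoose ν η : Polynomial ℕ) * X ^ (mdeg η)
      = (1 + X) ^ (mdeg ν) := by
  induction ν using Finsupp.induction with
  | zero =>
    have : (Finset.Iic (0 : ℕ →₀ ℕ)) = {0} := by
      ext η; simp [Finset.mem_Iic, le_zero_iff]
    rw [this]
    simp [mchoose, mdeg]
  | single_add a m ν hνa hm ih =>
    have ha : ν a = 0 := Finsupp.notMem_support_iff.mp hνa
    rw [sum_Iic_single_add a m ν ha]
    have : ∀ i ∈ Finset.range (m+1), ∀ η ∈ Finset.Iic ν,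
        (mchoose (Finsupp.single a m + ν) (Finsupp.single a i + η) : Polynomial ℕ)
            * X ^ (mdeg (Finsupp.single a i + η))
          = ((m.choose i : Polynomial ℕ) * X ^ i)
            * ((mchoose ν η : Polynomial ℕ) * X ^ (mdeg η)) := by
      intro i hi η hη
      rw [Finset.mem_Iic] at hη
      rw [mchoose_single_add ha hη i hm, mdeg_add, mdeg_single, Nat.cast_mul, pow_add]
      ring
    rw [Finset.sum_congr rfl fun i hi => Finset.sum_congr rfl fun η hη => this i hi η hη]
    have hfac : ∑ i ∈ Finset.range (m+1), ∑ η ∈ Finset.Iic ν,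
        ((m.choose i : Polynomial ℕ) * X ^ i) * ((mchoose ν η : Polynomial ℕ) * X ^ (mdeg η))
          = (∑ i ∈ Finset.range (m+1), (m.choose i : Polynomial ℕ) * X ^ i)
            * (∑ η ∈ Finset.Iic ν, (mchoose ν η : Polynomial ℕ) * X ^ (mdeg η)) := by
      rw [Finset.sum_mul]
      exact Finset.sum_congr rfl fun i _ => by rw [Finset.mul_sum]
    rw [hfac, ih, mdeg_add, mdeg_single, pow_add]
    congr 1
    rw [add_comm 1 (X : Polynomial ℕ), add_pow]
    refine Finset.sum_congr rfl fun i hi => ?_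
    rw [one_pow]
    ring

lemma vandermonde_fiber (ν : ℕ →₀ ℕ) (k : ℕ) :
    ∑ η ∈ (Finset.Iic ν).filter (fun η => mdeg η = k), mchoose ν η = (mdeg ν).choose k := by
  classical
  have h := congrArg (fun p => Polynomial.coeff p k) (genfun ν)
  simp only [finset_sum_coeff] at h
  have hterm : ∀ η ∈ Finset.Iic ν,
      ((mchoose ν η : Polynomial ℕ) * X ^ (mdeg η)).coeff k
        = if mdeg η = k then mchoose ν η else 0 := by
    intro η _
    rw [← Polynomial.C_eq_natCast, Polynomial.coeff_C_mul, Polynomial.coeff_X_pow]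
    by_cases hc : mdeg η = k
    · simp [hc]
    · simp [hc, Ne.symm hc]
  rw [Finset.sum_congr rfl hterm] at h
  rw [← Finset.sum_filter] at h
  have hrhs : ((1 + X : Polynomial ℕ) ^ (mdeg ν)).coeff k = (mdeg ν).choose k := by
    rw [add_comm, Polynomial.coeff_X_add_one_pow, Nat.cast_id]
  rw [hrhs] at h
  exact h

lemma mdeg_mono {η ν : ℕ →₀ ℕ} (h : η ≤ ν) : mdeg ν = mdeg η + mdeg (ν - η) := by
  conv_lhs => rw [← add_tsub_cancel_of_le h]
  exact mdeg_add _ _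

theorem ffHalf_multiindex_sum_lt (ν : ℕ →₀ ℕ) (hν : 1 ≤ mdeg ν) :
    ∑ η ∈ Finset.Ioo 0 ν,
        (mchoose ν η : ℝ) * ffHalf (mdeg η) * ffHalf (mdeg (ν - η))
      ≤ 2 * ffHalf (mdeg ν) := by
  classical
  set n := mdeg ν with hn
  have hset : Finset.Ioo 0 ν
      = (Finset.Iic ν).filter (fun η => 0 < mdeg η ∧ mdeg η < n) := by
    ext η
    simp only [Finset.mem_Ioo, Finset.mem_filter, Finset.mem_Iic]
    constructor
    · rintro ⟨h0, hlt⟩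
      have hle : η ≤ ν := le_of_lt hlt
      have hne : η ≠ ν := ne_of_lt hlt
      have hη0 : η ≠ 0 := by
        intro h; rw [h] at h0; exact lt_irrefl _ h0
      have hm0 : 0 < mdeg η := Nat.pos_of_ne_zero (fun h => hη0 ((mdeg_eq_zero_iff η).mp h))
      have hmn : mdeg η < n := by
        have hdec := mdeg_mono hle
        have hsub : mdeg (ν - η) ≠ 0 := by
          intro h
          have hz : ν - η = 0 := (mdeg_eq_zero_iff _).mp h
          have hadd := add_tsub_cancel_of_le hle
          rw [hz, add_zero] at hadd
          exact hne hadd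
        omega
      exact ⟨hle, hm0, hmn⟩
    · rintro ⟨hle, hm0, hmn⟩
      have hη0 : η ≠ 0 := by
        intro h; rw [h] at hm0; simp [mdeg] at hm0
      have hne : η ≠ ν := by
        intro h; rw [h] at hmn; exact lt_irrefl _ hmn
      exact ⟨pos_iff_ne_zero.mpr hη0, lt_of_le_of_ne hle hne⟩
  rw [hset]
  have hterm : ∀ η ∈ (Finset.Iic ν).filter (fun η => 0 < mdeg η ∧ mdeg η < n),
      (mchoose ν η : ℝ) * ffHalf (mdeg η) * ffHalf (mdeg (ν - η))
        = (mchoose ν η : ℝ) * ffHalf (mdeg η) * ffHalf (n - mdeg η) := by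
    intro η hη
    rw [Finset.mem_filter, Finset.mem_Iic] at hη
    have := mdeg_mono hη.1
    have : mdeg (ν - η) = n - mdeg η := by omega
    rw [this]
  rw [Finset.sum_congr rfl hterm]
  have hfib := Finset.sum_fiberwise_of_maps_to
    (s := (Finset.Iic ν).filter (fun η => 0 < mdeg η ∧ mdeg η < n))
    (g := mdeg) (t := Finset.Ioo 0 n)
    (fun η hη => by
      rw [Finset.mem_filter] at hη
      rw [Finset.mem_Ioo]
      exact hη.2)
    (f := fun η => (mchoose ν η : ℝ) * ffHalf (mdeg η) * ffHalf (n - mdeg η))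
  rw [← hfib]
  have hinner : ∀ k ∈ Finset.Ioo 0 n,
      ∑ η ∈ ((Finset.Iic ν).filter (fun η => 0 < mdeg η ∧ mdeg η < n)).filter
          (fun η => mdeg η = k),
        (mchoose ν η : ℝ) * ffHalf (mdeg η) * ffHalf (n - mdeg η)
        = (n.choose k : ℝ) * ffHalf k * ffHalf (n - k) := by
    intro k hk
    rw [Finset.mem_Ioo] at hk
    have hsets : ((Finset.Iic ν).filter (fun η => 0 < mdeg η ∧ mdeg η < n)).filter
          (fun η => mdeg η = k) = (Finset.Iic ν).filter (fun η => mdeg η = k) := by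
      ext η
      simp only [Finset.mem_filter, Finset.mem_Iic]
      constructor
      · rintro ⟨⟨h1, _⟩, h3⟩; exact ⟨h1, h3⟩
      · rintro ⟨h1, h2⟩
        exact ⟨⟨h1, by omega⟩, h2⟩
    rw [hsets]
    have : ∀ η ∈ (Finset.Iic ν).filter (fun η => mdeg η = k),
        (mchoose ν η : ℝ) * ffHalf (mdeg η) * ffHalf (n - mdeg η)
          = (mchoose ν η : ℝ) * (ffHalf k * ffHalf (n - k)) := by
      intro η hη
      rw [Finset.mem_filter] at hη
      rw [hη.2]; ring
    rw [Finset.sum_congr rfl this, ← Finset.sum_mul, ← Nat.cast_sum]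
    rw [vandermonde_fiber ν k, ← hn]
    ring
  rw [Finset.sum_congr rfl hinner]
  rcases Nat.lt_or_ge n 2 with h2 | h2
  · have hn1 : n = 1 := by omega
    rw [hn1]
    have he : Finset.Ioo 0 1 = (∅ : Finset ℕ) := rfl
    rw [he, Finset.sum_empty]
    have := ffHalf_nonneg 1
    linarith
  · rw [ffHalf_conv n h2]
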